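/- Soundness of loop derivations: if ⟨σ, skip, loop1(e1,s1,e2,s2)::π⟩ →* ⟨σ', skip, π⟩ is a loop derivation (every intermediate stack equals or extends either loop1(e1,s1,e2,s2)::π or loop2(e1,s1,e2,s2)::π), then the big-step loop-iteration judgement ⟨σ, (e1,s1,e2,s2)⟩ ⇓ σ' holds. -/

import Mathlib

/-- Janus reversible assignment operators: `+=`, `-=`, `^=`. -/
inductive Op where
  | add | sub | xor
deriving DecidableEq

/-- The operator inverter `I_op`. -/
def Op.inv : Op → Op
  | .add => .sub
  | .sub => .add
  | .xor => .xor

/-- Interpretation of the operators on integers. -/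
def Op.apply : Op → Int → Int → Int
  | .add, a, b => a + b
  | .sub, a, b => a - b
  | .xor, a, b => Int.xor a b

/-- Storage locations: plain variables and indexed array cells. -/
inductive Loc where
  | var (x : String)
  | arr (x : String) (i : Int)
deriving DecidableEq

/-- A store maps variable names and indexed variable names to values. -/
def Store := Loc → Int

def Store.update (σ : Store) (l : Loc) (v : Int) : Store :=
  fun l' => if l' = l then v else σ l'

/-- The empty store maps every variable to zero. -/
def emptyStore : Store := fun _ => 0

/-- Janus expressions. Binary operators are modelled by their interpretation. -/
inductive Expr where
  | const (c : Int)
  | var (x : String)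
  | arr (x : String) (e : Expr)
  | bop (f : Int → Int → Int) (e1 e2 : Expr)

/-- Evaluation of expressions (a deterministic function of the store). -/
def Expr.eval (σ : Store) : Expr → Int
  | .const c => c
  | .var x => σ (.var x)
  | .arr x e => σ (.arr x (Expr.eval σ e))
  | .bop f e1 e2 => f (Expr.eval σ e1) (Expr.eval σ e2)
/-- Janus statements. -/
inductive Stmt where
  | assign (x : String) (op : Op) (e : Expr)
  | assignArr (x : String) (ei : Expr) (op : Op) (e : Expr)
  | cond (e1 : Expr) (s1 s2 : Stmt) (e2 : Expr)
  | loop (e1 : Expr) (s1 s2 : Stmt) (e2 : Expr)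
  | call (id : String)
  | uncall (id : String)
  | skip
  | seq (s1 s2 : Stmt)

/-- The Janus statement inverter `I`. -/
def Stmt.inv : Stmt → Stmt
  | .assign x op e => .assign x op.inv e
  | .assignArr x ei op e => .assignArr x ei op.inv e
  | .cond e1 s1 s2 e2 => .cond e2 s1.inv s2.inv e1
  | .loop e1 s1 s2 e2 => .loop e2 s1.inv s2.inv e1
  | .call id => .uncall id
  | .uncall id => .call id
  | .skip => .skip
  | .seq s1 s2 => .seq s2.inv s1.inv
mutual
/-- Big-step semantics of Janus, `⟨σ, s⟩ ⇓ σ'`. -/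
inductive BigStep (Γ : String → Stmt) : Store → Stmt → Store → Prop where
  | assVar {σ : Store} {x : String} {op : Op} {e : Expr} :
      BigStep Γ σ (.assign x op e)
        (σ.update (.var x) (op.apply (σ (.var x)) (e.eval σ)))
  | assArr {σ : Store} {x : String} {ei e : Expr} {op : Op} :
      BigStep Γ σ (.assignArr x ei op e)
        (σ.update (.arr x (ei.eval σ)) (op.apply (σ (.arr x (ei.eval σ))) (e.eval σ)))
  | call {σ σ' : Store} {id : String} :
      BigStep Γ σ (Γ id) σ' → BigStep Γ σ (.call id) σ'
  | uncall {σ σ' : Store} {id : String} :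
      BigStep Γ σ (Γ id).inv σ' → BigStep Γ σ (.uncall id) σ'
  | seq {σ σ' σ'' : Store} {s1 s2 : Stmt} :
      BigStep Γ σ s1 σ' → BigStep Γ σ' s2 σ'' → BigStep Γ σ (.seq s1 s2) σ''
  | ifTrue {σ σ' : Store} {e1 e2 : Expr} {s1 s2 : Stmt} :
      e1.eval σ ≠ 0 → BigStep Γ σ s1 σ' → e2.eval σ' ≠ 0 →
      BigStep Γ σ (.cond e1 s1 s2 e2) σ'
  | ifFalse {σ σ' : Store} {e1 e2 : Expr} {s1 s2 : Stmt} :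
      e1.eval σ = 0 → BigStep Γ σ s2 σ' → e2.eval σ' = 0 →
      BigStep Γ σ (.cond e1 s1 s2 e2) σ'
  | loopMain {σ σ' σ'' : Store} {e1 e2 : Expr} {s1 s2 : Stmt} :
      e1.eval σ ≠ 0 → BigStep Γ σ s1 σ' → BigLoop Γ σ' e1 s1 s2 e2 σ'' →
      BigStep Γ σ (.loop e1 s1 s2 e2) σ''
  | skip {σ : Store} : BigStep Γ σ .skip σ

/-- Big-step loop-iteration judgement on tuples `(e1, s1, e2, s2)`,
`⟨σ, (e1,s1,e2,s2)⟩ ⇓ σ'`. -/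
inductive BigLoop (Γ : String → Stmt) : Store → Expr → Stmt → Stmt → Expr → Store → Prop where
  | base {σ : Store} {e1 e2 : Expr} {s1 s2 : Stmt} :
      e2.eval σ ≠ 0 → BigLoop Γ σ e1 s1 s2 e2 σ
  | step {σ σ' σ'' σ''' : Store} {e1 e2 : Expr} {s1 s2 : Stmt} :
      e2.eval σ = 0 → BigStep Γ σ s2 σ' → e1.eval σ' = 0 → BigStep Γ σ' s1 σ'' →
      BigLoop Γ σ'' e1 s1 s2 e2 σ''' → BigLoop Γ σ e1 s1 s2 e2 σ'''
end
/-- Stack elements of the stack-based small-step semantics. -/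
inductive Frame where
  | seq (s : Stmt)
  | ifTrue (e : Expr)
  | ifFalse (e : Expr)
  | loop1 (e1 : Expr) (s1 s2 : Stmt) (e2 : Expr)
  | loop2 (e1 : Expr) (s1 s2 : Stmt) (e2 : Expr)

/-- Configurations `⟨σ, s, π⟩` of the stack-based small-step semantics. -/
structure Config where
  store : Store
  stmt : Stmt
  stack : List Frame

/-- The stack-based small-step semantics of Janus. -/
inductive Step (Γ : String → Stmt) : Config → Config → Prop where
  | assVar {σ : Store} {x : String} {op : Op} {e : Expr} {π : List Frame} :
      Step Γ ⟨σ, .assign x op e, π⟩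
        ⟨σ.update (.var x) (op.apply (σ (.var x)) (e.eval σ)), .skip, π⟩
  | assArr {σ : Store} {x : String} {ei e : Expr} {op : Op} {π : List Frame} :
      Step Γ ⟨σ, .assignArr x ei op e, π⟩
        ⟨σ.update (.arr x (ei.eval σ)) (op.apply (σ (.arr x (ei.eval σ))) (e.eval σ)), .skip, π⟩
  | call {σ : Store} {id : String} {π : List Frame} :
      Step Γ ⟨σ, .call id, π⟩ ⟨σ, Γ id, π⟩
  | uncall {σ : Store} {id : String} {π : List Frame} :
      Step Γ ⟨σ, .uncall id, π⟩ ⟨σ, (Γ id).inv, π⟩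
  | seq1 {σ : Store} {s1 s2 : Stmt} {π : List Frame} :
      Step Γ ⟨σ, .seq s1 s2, π⟩ ⟨σ, s1, .seq s2 :: π⟩
  | seq2 {σ : Store} {s2 : Stmt} {π : List Frame} :
      Step Γ ⟨σ, .skip, .seq s2 :: π⟩ ⟨σ, s2, π⟩
  | ifTrue1 {σ : Store} {e1 e2 : Expr} {s1 s2 : Stmt} {π : List Frame} :
      e1.eval σ ≠ 0 →
      Step Γ ⟨σ, .cond e1 s1 s2 e2, π⟩ ⟨σ, s1, .ifTrue e2 :: π⟩
  | ifTrue2 {σ : Store} {e2 : Expr} {π : List Frame} :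
      e2.eval σ ≠ 0 →
      Step Γ ⟨σ, .skip, .ifTrue e2 :: π⟩ ⟨σ, .skip, π⟩
  | ifFalse1 {σ : Store} {e1 e2 : Expr} {s1 s2 : Stmt} {π : List Frame} :
      e1.eval σ = 0 →
      Step Γ ⟨σ, .cond e1 s1 s2 e2, π⟩ ⟨σ, s2, .ifFalse e2 :: π⟩
  | ifFalse2 {σ : Store} {e2 : Expr} {π : List Frame} :
      e2.eval σ = 0 →
      Step Γ ⟨σ, .skip, .ifFalse e2 :: π⟩ ⟨σ, .skip, π⟩
  | loopMain {σ : Store} {e1 e2 : Expr} {s1 s2 : Stmt} {π : List Frame} :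
      e1.eval σ ≠ 0 →
      Step Γ ⟨σ, .loop e1 s1 s2 e2, π⟩ ⟨σ, s1, .loop1 e1 s1 s2 e2 :: π⟩
  | loopBase {σ : Store} {e1 e2 : Expr} {s1 s2 : Stmt} {π : List Frame} :
      e2.eval σ ≠ 0 →
      Step Γ ⟨σ, .skip, .loop1 e1 s1 s2 e2 :: π⟩ ⟨σ, .skip, π⟩
  | loop1 {σ : Store} {e1 e2 : Expr} {s1 s2 : Stmt} {π : List Frame} :
      e2.eval σ = 0 →
      Step Γ ⟨σ, .skip, .loop1 e1 s1 s2 e2 :: π⟩ ⟨σ, s2, .loop2 e1 s1 s2 e2 :: π⟩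
  | loop2 {σ : Store} {e1 e2 : Expr} {s1 s2 : Stmt} {π : List Frame} :
      e1.eval σ = 0 →
      Step Γ ⟨σ, .skip, .loop2 e1 s1 s2 e2 :: π⟩ ⟨σ, s1, .loop1 e1 s1 s2 e2 :: π⟩
/-- `PathP R P c c'` : there is an `R`-derivation from `c` to `c'` all of whose
configurations except possibly the last one satisfy the invariant `P`
(used to express *balanced* and *loop* derivations via conditions on the
intermediate stacks). -/
inductive PathP (R : Config → Config → Prop) (P : Config → Prop) : Config → Config → Prop where
  | refl (c : Config) : PathP R P c c
  | head {c c' c'' : Config} : P c → R c c' → PathP R P c' c'' → PathP R P c c''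

/-! ### Auxiliary machinery for the soundness proof -/

/-- `c`'s stack extends `π`. -/
abbrev SufP (π : List Frame) (c : Config) : Prop := ∃ τ, c.stack = τ ++ π

/-- Length-indexed version of `PathP`. -/
inductive PathPN (R : Config → Config → Prop) (P : Config → Prop) :
    ℕ → Config → Config → Prop where
  | refl (c : Config) : PathPN R P 0 c c
  | head {n : ℕ} {c c' c'' : Config} :
      P c → R c c' → PathPN R P n c' c'' → PathPN R P (n + 1) c c''

lemma PathP.toN {R P : _} {c c' : Config} (h : PathP R P c c') :
    ∃ n, PathPN R P n c c' := by
  induction h with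
  | refl c => exact ⟨0, .refl c⟩
  | head hP hR _ ih => obtain ⟨n, hn⟩ := ih; exact ⟨n + 1, .head hP hR hn⟩

lemma PathPN.mono {R : Config → Config → Prop} {P Q : Config → Prop} {n : ℕ}
    {c c' : Config} (h : PathPN R P n c c') (hPQ : ∀ d, P d → Q d) :
    PathPN R Q n c c' := by
  induction h with
  | refl c => exact .refl c
  | head hP hR _ ih => exact .head (hPQ _ hP) hR ih

lemma no_suffix_len {l₁ l₂ : List Frame} (h : l₁.length < l₂.length) :
    ¬ ∃ τ, l₁ = τ ++ l₂ := by
  rintro ⟨τ, ht⟩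
  have := congrArg List.length ht
  simp [List.length_append] at this
  omega

lemma cons_suffix_eq {a b : Frame} {l : List Frame} (h : ∃ τ, a :: l = τ ++ b :: l) :
    a = b := by
  obtain ⟨τ, h⟩ := h
  cases τ with
  | nil => simpa using h
  | cons t τ' =>
    injection h with h1 h2
    exact absurd ⟨τ', h2⟩ (no_suffix_len (by simp))

/-- Classification of a step w.r.t. a stack boundary `f :: π`. -/
lemma step_suffix {Γ : String → Stmt} {c c' : Config} (h : Step Γ c c')
    {f : Frame} {π τ : List Frame} (hs : c.stack = τ ++ f :: π) :
    (∃ τ', c'.stack = τ' ++ f :: π) ∨ (τ = [] ∧ c.stmt = .skip) := by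
  cases h with
  | assVar => exact .inl ⟨τ, hs⟩
  | assArr => exact .inl ⟨τ, hs⟩
  | call => exact .inl ⟨τ, hs⟩
  | uncall => exact .inl ⟨τ, hs⟩
  | @seq1 σ s1 s2 ρ =>
    have hs' : ρ = τ ++ f :: π := hs
    exact .inl ⟨.seq s2 :: τ, show Frame.seq s2 :: ρ = _ ++ f :: π by rw [hs']; exact List.cons_append.symm⟩
  | @ifTrue1 σ e1 e2 s1 s2 ρ h1 =>
    have hs' : ρ = τ ++ f :: π := hs
    exact .inl ⟨.ifTrue e2 :: τ, show Frame.ifTrue e2 :: ρ = _ ++ f :: π by rw [hs']; exact List.cons_append.symm⟩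
  | @ifFalse1 σ e1 e2 s1 s2 ρ h1 =>
    have hs' : ρ = τ ++ f :: π := hs
    exact .inl ⟨.ifFalse e2 :: τ, show Frame.ifFalse e2 :: ρ = _ ++ f :: π by rw [hs']; exact List.cons_append.symm⟩
  | @loopMain σ e1 e2 s1 s2 ρ h1 =>
    have hs' : ρ = τ ++ f :: π := hs
    exact .inl ⟨.loop1 e1 s1 s2 e2 :: τ,
      show Frame.loop1 e1 s1 s2 e2 :: ρ = _ ++ f :: π by rw [hs']; exact List.cons_append.symm⟩
  | @seq2 σ s2 ρ =>
    cases τ with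
    | nil => exact .inr ⟨rfl, rfl⟩
    | cons t τ' =>
      have hs' : Frame.seq s2 :: ρ = t :: (τ' ++ f :: π) := hs
      injection hs' with h1 h2
      exact .inl ⟨τ', h2⟩
  | @ifTrue2 σ e2 ρ h1 =>
    cases τ with
    | nil => exact .inr ⟨rfl, rfl⟩
    | cons t τ' =>
      have hs' : Frame.ifTrue e2 :: ρ = t :: (τ' ++ f :: π) := hs
      injection hs' with h1 h2
      exact .inl ⟨τ', h2⟩
  | @ifFalse2 σ e2 ρ h1 =>
    cases τ with
    | nil => exact .inr ⟨rfl, rfl⟩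
    | cons t τ' =>
      have hs' : Frame.ifFalse e2 :: ρ = t :: (τ' ++ f :: π) := hs
      injection hs' with h1 h2
      exact .inl ⟨τ', h2⟩
  | @loopBase σ e1 e2 s1 s2 ρ h1 =>
    cases τ with
    | nil => exact .inr ⟨rfl, rfl⟩
    | cons t τ' =>
      have hs' : Frame.loop1 e1 s1 s2 e2 :: ρ = t :: (τ' ++ f :: π) := hs
      injection hs' with h1 h2
      exact .inl ⟨τ', h2⟩
  | @loop1 σ e1 e2 s1 s2 ρ h1 =>
    cases τ with
    | nil => exact .inr ⟨rfl, rfl⟩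
    | cons t τ' =>
      have hs' : Frame.loop1 e1 s1 s2 e2 :: ρ = t :: (τ' ++ f :: π) := hs
      injection hs' with h1 h2
      exact .inl ⟨.loop2 e1 s1 s2 e2 :: τ',
        show Frame.loop2 e1 s1 s2 e2 :: ρ = _ by rw [h2]; exact List.cons_append.symm⟩
  | @loop2 σ e1 e2 s1 s2 ρ h1 =>
    cases τ with
    | nil => exact .inr ⟨rfl, rfl⟩
    | cons t τ' =>
      have hs' : Frame.loop2 e1 s1 s2 e2 :: ρ = t :: (τ' ++ f :: π) := hs
      injection hs' with h1 h2
      exact .inl ⟨.loop1 e1 s1 s2 e2 :: τ',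
        show Frame.loop1 e1 s1 s2 e2 :: ρ = _ by rw [h2]; exact List.cons_append.symm⟩

/-- A step from `⟨σ, skip, π⟩` always leaves the region of stacks extending `π`. -/
lemma step_from_skip {Γ : String → Stmt} {σ : Store} {π : List Frame} {c' : Config}
    (h : Step Γ ⟨σ, .skip, π⟩ c') : ¬ SufP π c' := by
  cases h with
  | seq2 => exact no_suffix_len (by simp)
  | ifTrue2 _ => exact no_suffix_len (by simp)
  | ifFalse2 _ => exact no_suffix_len (by simp)
  | loopBase _ => exact no_suffix_len (by simp)
  | loop1 _ => intro hc; exact absurd (cons_suffix_eq hc) (by simp)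
  | loop2 _ => intro hc; exact absurd (cons_suffix_eq hc) (by simp)

/-- Splitting a path at the first crossing of the boundary `f :: π`. -/
lemma PathPN.split {Γ : String → Stmt} {P : Config → Prop} {n : ℕ} {c cend : Config}
    (hp : PathPN (Step Γ) P n c cend) :
    ∀ (f : Frame) (π τ : List Frame), c.stack = τ ++ f :: π →
    (¬ ∃ τ', cend.stack = τ' ++ f :: π) →
    ∃ m k σ1 c1, m + (k + 1) = n ∧
      PathPN (Step Γ) (fun d => P d ∧ ∃ ρ, d.stack = ρ ++ f :: π) m c ⟨σ1, .skip, f :: π⟩ ∧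
      P ⟨σ1, .skip, f :: π⟩ ∧
      Step Γ ⟨σ1, .skip, f :: π⟩ c1 ∧
      PathPN (Step Γ) P k c1 cend := by
  induction hp with
  | refl c => intro f π τ hs hend; exact absurd ⟨τ, hs⟩ hend
  | @head n c c' c'' hP hR hrest ih =>
    intro f π τ hs hend
    rcases step_suffix hR hs with ⟨τ', h'⟩ | ⟨hτ, hskip⟩
    · obtain ⟨m, k, σ1, c1, hmk, hpre, hPm, hcr, hsuf⟩ := ih f π τ' h' hend
      exact ⟨m + 1, k, σ1, c1, by omega, .head ⟨hP, τ, hs⟩ hR hpre, hPm, hcr, hsuf⟩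
    · subst hτ
      obtain ⟨cs, cst, ck⟩ := c
      change cst = Stmt.skip at hskip
      change ck = [] ++ f :: π at hs
      simp only [List.nil_append] at hs
      subst hskip; subst hs
      exact ⟨0, n, cs, c', by omega, .refl _, hP, hR, hrest⟩

/-- Combined soundness of balanced and loop derivations, by strong induction on
the length of the derivation. -/
lemma soundness_main (Γ : String → Stmt) : ∀ n : ℕ,
    (∀ σ s (π : List Frame) σ',
      PathPN (Step Γ) (SufP π) n ⟨σ, s, π⟩ ⟨σ', .skip, π⟩ → BigStep Γ σ s σ') ∧
    (∀ σ σ' e1 e2 s1 s2 (π : List Frame),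
      PathPN (Step Γ) (SufP π) n ⟨σ, .skip, .loop1 e1 s1 s2 e2 :: π⟩ ⟨σ', .skip, π⟩ →
      BigLoop Γ σ e1 s1 s2 e2 σ') := by
  intro n
  induction n using Nat.strong_induction_on with
  | _ n IH =>
    constructor
    · -- balanced soundness
      intro σ s π σ' hp
      cases hp with
      | refl => exact .skip
      | @head n' _ c' _ hP hR hp' =>
        have hc' : SufP π c' := by
          cases hp' with
          | refl => exact ⟨[], rfl⟩
          | head hP2 _ _ => exact hP2
        cases hR with
        | assVar =>
          have hb := (IH n' (by omega)).1 _ .skip π σ' hp'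
          cases hb; exact .assVar
        | assArr =>
          have hb := (IH n' (by omega)).1 _ .skip π σ' hp'
          cases hb; exact .assArr
        | call => exact .call ((IH n' (by omega)).1 _ _ _ _ hp')
        | uncall => exact .uncall ((IH n' (by omega)).1 _ _ _ _ hp')
        | @seq1 _ s1 s2 _ =>
          obtain ⟨m, k, σ1, c1, hmk, hpre, hPm, hcr, hsuf⟩ :=
            hp'.split (.seq s2) π [] rfl (no_suffix_len (by simp))
          have hb1 := (IH m (by omega)).1 σ s1 (.seq s2 :: π) σ1
            (hpre.mono fun d hd => hd.2)
          cases hcr with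
          | seq2 =>
            exact .seq hb1 ((IH k (by omega)).1 σ1 s2 π σ' hsuf)
        | seq2 => exact absurd hc' (no_suffix_len (by simp))
        | @ifTrue1 _ e1 e2 s1 s2 _ he1 =>
          obtain ⟨m, k, σ1, c1, hmk, hpre, hPm, hcr, hsuf⟩ :=
            hp'.split (.ifTrue e2) π [] rfl (no_suffix_len (by simp))
          have hb1 := (IH m (by omega)).1 σ s1 (.ifTrue e2 :: π) σ1
            (hpre.mono fun d hd => hd.2)
          cases hcr with
          | ifTrue2 he2 =>
            have hb2 := (IH k (by omega)).1 σ1 .skip π σ' hsuf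
            cases hb2
            exact .ifTrue he1 hb1 he2
        | ifTrue2 _ => exact absurd hc' (no_suffix_len (by simp))
        | @ifFalse1 _ e1 e2 s1 s2 _ he1 =>
          obtain ⟨m, k, σ1, c1, hmk, hpre, hPm, hcr, hsuf⟩ :=
            hp'.split (.ifFalse e2) π [] rfl (no_suffix_len (by simp))
          have hb1 := (IH m (by omega)).1 σ s2 (.ifFalse e2 :: π) σ1
            (hpre.mono fun d hd => hd.2)
          cases hcr with
          | ifFalse2 he2 =>
            have hb2 := (IH k (by omega)).1 σ1 .skip π σ' hsuf
            cases hb2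
            exact .ifFalse he1 hb1 he2
        | ifFalse2 _ => exact absurd hc' (no_suffix_len (by simp))
        | @loopMain _ e1 e2 s1 s2 _ he1 =>
          obtain ⟨m, k, σ1, c1, hmk, hpre, hPm, hcr, hsuf⟩ :=
            hp'.split (.loop1 e1 s1 s2 e2) π [] rfl (no_suffix_len (by simp))
          have hb1 := (IH m (by omega)).1 σ s1 (.loop1 e1 s1 s2 e2 :: π) σ1
            (hpre.mono fun d hd => hd.2)
          have hloop := (IH (k + 1) (by omega)).2 σ1 σ' e1 e2 s1 s2 π
            (.head ⟨[_], rfl⟩ hcr hsuf)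
          exact .loopMain he1 hb1 hloop
        | loopBase _ => exact absurd hc' (no_suffix_len (by simp))
        | loop1 _ => exact absurd (cons_suffix_eq hc') (by simp)
        | loop2 _ => exact absurd (cons_suffix_eq hc') (by simp)
    · -- loop soundness
      intro σ σ' e1 e2 s1 s2 π hp
      cases hp with
      | @head n' _ c' _ hP hR hp' =>
        cases hR with
        | loopBase he2 =>
          cases hp' with
          | refl => exact .base he2
          | @head n'' _ c'' _ hP2 hR2 hp'' =>
            have hc'' : SufP π c'' := by
              cases hp'' with
              | refl => exact ⟨[], rfl⟩
              | head hP3 _ _ => exact hP3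
            exact absurd hc'' (step_from_skip hR2)
        | loop1 he2 =>
          obtain ⟨m, k, σ2, c1, hmk, hpre, hPm, hcr, hsuf⟩ :=
            hp'.split (.loop2 e1 s1 s2 e2) π [] rfl (no_suffix_len (by simp))
          have hb2 := (IH m (by omega)).1 σ s2 (.loop2 e1 s1 s2 e2 :: π) σ2
            (hpre.mono fun d hd => hd.2)
          cases hcr with
          | loop2 he1 =>
            obtain ⟨m2, k2, σ3, c2, hmk2, hpre2, hPm2, hcr2, hsuf2⟩ :=
              hsuf.split (.loop1 e1 s1 s2 e2) π [] rfl (no_suffix_len (by simp))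
            have hb1 := (IH m2 (by omega)).1 σ2 s1 (.loop1 e1 s1 s2 e2 :: π) σ3
              (hpre2.mono fun d hd => hd.2)
            have hloop := (IH (k2 + 1) (by omega)).2 σ3 σ' e1 e2 s1 s2 π
              (.head ⟨[_], rfl⟩ hcr2 hsuf2)
            exact .step he2 hb2 he1 hb1 hloop

/-- Soundness of loop derivations: if
`⟨σ, skip, loop1(e1,s1,e2,s2)::π⟩ →* ⟨σ', skip, π⟩` is a loop derivation (every
intermediate stack equals or extends either `loop1(e1,s1,e2,s2)::π` or
`loop2(e1,s1,e2,s2)::π`), then `⟨σ, (e1,s1,e2,s2)⟩ ⇓ σ'`. -/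
theorem stmt6_soundness_loop (Γ : String → Stmt) (σ σ' : Store)
    (e1 e2 : Expr) (s1 s2 : Stmt) (π : List Frame)
    (h : PathP (Step Γ)
          (fun c => (∃ τ, c.stack = τ ++ (Frame.loop1 e1 s1 s2 e2 :: π)) ∨
                    (∃ τ, c.stack = τ ++ (Frame.loop2 e1 s1 s2 e2 :: π)))
          ⟨σ, .skip, .loop1 e1 s1 s2 e2 :: π⟩ ⟨σ', .skip, π⟩) :
    BigLoop Γ σ e1 s1 s2 e2 σ' := by
  obtain ⟨n, hn⟩ := h.toN
  refine (soundness_main Γ n).2 σ σ' e1 e2 s1 s2 π (hn.mono ?_)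
  rintro d (⟨τ, hd⟩ | ⟨τ, hd⟩)
  · exact ⟨τ ++ [.loop1 e1 s1 s2 e2], by simp [hd]⟩
  · exact ⟨τ ++ [.loop2 e1 s1 s2 e2], by simp [hd]⟩
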